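/- Let K ≥ 4 be an even integer, γ := K^K, ℓ ≥ 1 an integer, and W* := γ^ℓ. Let s ≥ 0 and L ≥ 1 be integers with s + L ≤ W*. Choose x uniformly at random from {1,…,W*} and, independently, y uniformly at random from {1,…,K}; set W' := W*·K^y and α_q := W'/γ^q for q = 0,…,ℓ. For q ∈ {0,…,ℓ}, the level-q blocks are the integer intervals ((j−1)·α_q, j·α_q] for j = 1,…,W'/α_q. Define the level of the shifted interval I := (s+x, s+x+L] as the largest q ∈ {0,…,ℓ} such that I is contained in a single level-q block, and call I good if either its level equals ℓ, or its level equals some q < ℓ and at least K/2 of the level-(q+1) blocks are entirely contained in I. Then the probability that I is good is at least 1 − 3/K. -/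

import Mathlib

/-- A driver fitting within one level block, reconstructed from its offset
modulo the block size. -/
lemma contained_of_mod (t L A N : ℕ) (hA : 0 < A) (ht : t + L ≤ N * A)
    (hL : 1 ≤ L) (hmod : t % A + L ≤ A) :
    ∃ j : ℕ, 1 ≤ j ∧ j ≤ N ∧ (j-1)*A ≤ t ∧ t + L ≤ j*A := by
  refine ⟨t/A + 1, Nat.succ_le_succ (Nat.zero_le _), ?_, ?_, ?_⟩
  · exact Nat.add_one_le_iff.mpr ((Nat.div_lt_iff_lt_mul hA).mpr (by omega))
  · simpa using Nat.div_mul_le_self t A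
  · have hdm := Nat.div_add_mod t A
    calc t + L = A*(t/A) + (t % A + L) := by omega
    _ ≤ A*(t/A) + A := by omega
    _ = (t/A+1)*A := by ring

/-- If the driver is long enough, it fully contains many blocks. -/
lemma count_ge_aux (t L α N d : ℕ) (hα : 0 < α) (htL : t + L ≤ N * α)
    (hlen : (d + 2) * α ≤ L) :
    d ≤ ((Finset.Icc 1 N).filter
      (fun j => t ≤ (j-1)*α ∧ j*α ≤ t+L)).card := by
  classical
  have hsub : Finset.Icc (t/α + 2) ((t+L)/α) ⊆ (Finset.Icc 1 N).filter
      (fun j => t ≤ (j-1)*α ∧ j*α ≤ t+L) := by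
    intro j hj
    rw [Finset.mem_Icc] at hj
    have hj1 : 1 ≤ j := le_trans (le_trans one_le_two (Nat.le_add_left 2 (t/α))) hj.1
    have hjb : j * α ≤ t + L := by
      calc j * α ≤ (t+L)/α * α := Nat.mul_le_mul_right _ hj.2
      _ ≤ t + L := Nat.div_mul_le_self _ _
    have hjN : j ≤ N := by
      have := le_trans hjb htL
      exact Nat.le_of_mul_le_mul_right this hα
    have hta : t ≤ (j-1)*α := by
      have h1 : t < (t/α + 1) * α := by
        nlinarith [Nat.div_add_mod t α, Nat.mod_lt t hα]
      calc t ≤ (t/α+1)*α := le_of_lt h1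
      _ ≤ (j-1)*α := Nat.mul_le_mul_right _ (by omega)
    rw [Finset.mem_filter, Finset.mem_Icc]
    exact ⟨⟨hj1, hjN⟩, hta, hjb⟩
  have hba : t/α + 2 + d ≤ (t+L)/α := by
    have h2 : (t + (d+2)*α) / α ≤ (t+L)/α := Nat.div_le_div_right (by omega)
    rw [Nat.add_mul_div_right _ _ hα] at h2
    omega
  calc d ≤ (Finset.Icc (t/α + 2) ((t+L)/α)).card := by rw [Nat.card_Icc]; omega
  _ ≤ _ := Finset.card_le_card hsub

/-- Counting shifts that are cut at scale α. -/
lemma cut_count_aux (W α s L : ℕ) (hα : 0 < α) (hd : α ∣ W) (hLα : L ≤ α) :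
    ((Finset.Icc 1 W).filter (fun x => α < (s+x) % α + L)).card
      ≤ (W/α) * (L-1) := by
  classical
  have hcard : ((Finset.range (W/α)) ×ˢ (Finset.range (L-1))).card = (W/α)*(L-1) := by
    simp
  rw [← hcard]
  apply Finset.card_le_card_of_injOn
    (fun x => ((x-1)/α, (s+x) % α - (α - L + 1)))
  · intro x hx
    rw [Finset.mem_coe, Finset.mem_filter, Finset.mem_Icc] at hx
    obtain ⟨⟨hx1, hxW⟩, hcut⟩ := hx
    have hmod : (s+x) % α < α := Nat.mod_lt _ hα
    rw [Finset.mem_coe, Finset.mem_product, Finset.mem_range, Finset.mem_range]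
    constructor
    · rw [Nat.div_lt_iff_lt_mul hα, Nat.div_mul_cancel hd]
      omega
    · show (s+x) % α - (α - L + 1) < L - 1
      omega
  · intro x₁ h₁ x₂ h₂ heq
    rw [Finset.mem_coe, Finset.mem_filter, Finset.mem_Icc] at h₁ h₂
    have hmod₁ : (s+x₁) % α < α := Nat.mod_lt _ hα
    have hmod₂ : (s+x₂) % α < α := Nat.mod_lt _ hα
    have e1 : (x₁-1)/α = (x₂-1)/α := congrArg Prod.fst heq
    have e2 : (s+x₁) % α - (α - L + 1) = (s+x₂) % α - (α - L + 1) :=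
      congrArg Prod.snd heq
    have e3 : (s+x₁) % α = (s+x₂) % α := by
      have c1 := h₁.2
      have c2 := h₂.2
      omega
    have hme : s + x₁ ≡ s + x₂ [MOD α] := e3
    have hxe : x₁ ≡ x₂ [MOD α] := (Nat.ModEq.add_left_cancel' s) hme
    have hq1 : (x₁-1)/α * α ≤ x₁ - 1 := Nat.div_mul_le_self _ _
    have hq2 : (x₂-1)/α * α ≤ x₂ - 1 := Nat.div_mul_le_self _ _
    have hr1 : x₁ - 1 < (x₁-1)/α * α + α := by
      nlinarith [Nat.div_add_mod (x₁-1) α, Nat.mod_lt (x₁-1) hα]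
    have hr2 : x₂ - 1 < (x₂-1)/α * α + α := by
      nlinarith [Nat.div_add_mod (x₂-1) α, Nat.mod_lt (x₂-1) hα]
    rw [e1] at hq1 hr1
    rcases le_total x₁ x₂ with hle | hle
    · obtain ⟨k, hk⟩ := (Nat.modEq_iff_dvd' hle).mp hxe
      have hxlt : x₂ - x₁ < α := by omega
      rw [hk] at hxlt
      have hk0 : k < 1 := Nat.lt_of_mul_lt_mul_left (by rwa [mul_one])
      rcases Nat.lt_one_iff.mp hk0 with rfl
      simp at hk
      omega
    · obtain ⟨k, hk⟩ := (Nat.modEq_iff_dvd' hle).mp hxe.symm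
      have hxlt : x₁ - x₂ < α := by omega
      rw [hk] at hxlt
      have hk0 : k < 1 := Nat.lt_of_mul_lt_mul_left (by rwa [mul_one])
      rcases Nat.lt_one_iff.mp hk0 with rfl
      simp at hk
      omega

/-- A bad pair is cut at a scale `K^m` close to its length `L`. -/
lemma bad_mem (K ℓ s L x y : ℕ) (S : Set ℕ)
    (hS : S = {q : ℕ | q ≤ ℓ ∧ ∃ j : ℕ, 1 ≤ j ∧ j ≤ (K^K)^q ∧
      (j - 1) * ((K^K)^ℓ * K^y / (K^K)^q) ≤ s + x ∧
      s + x + L ≤ j * ((K^K)^ℓ * K^y / (K^K)^q)})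
    (hK : 4 ≤ K) (hℓ : 1 ≤ ℓ) (hL : 1 ≤ L) (hsL : s + L ≤ (K^K)^ℓ)
    (hx1 : 1 ≤ x) (hxW : x ≤ (K^K)^ℓ) (hy1 : 1 ≤ y) (hyK : y ≤ K)
    (hnp : ¬ (sSup S = ℓ ∨ (sSup S < ℓ ∧ K / 2 ≤
      ((Finset.Icc 1 ((K^K) ^ (sSup S + 1))).filter
        (fun j => s + x ≤ (j - 1) * ((K^K)^ℓ * K^y / (K^K)^(sSup S + 1)) ∧
          j * ((K^K)^ℓ * K^y / (K^K)^(sSup S + 1)) ≤ s + x + L)).card))) :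
    ∃ m : ℕ, (1 ≤ m ∧ m ≤ K*ℓ ∧ L < (K/2+2)*K^m) ∧
      K^m < (s+x) % K^m + L ∧ y = m - K*((m-1)/K) := by
  classical
  have hK0 : 0 < K := by omega
  have hγ0 : 0 < K^K := by positivity
  have hpow : ∀ q, q ≤ ℓ → (K^K)^ℓ * K^y / (K^K)^q = (K^K)^(ℓ-q) * K^y := by
    intro q hq
    rw [show (K^K)^ℓ = (K^K)^q * (K^K)^(ℓ-q) by rw [← pow_add]; congr 1; omega,
      mul_assoc, Nat.mul_div_cancel_left _ (pow_pos hγ0 q)]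
  have hW' : s + x + L ≤ (K^K)^ℓ * K^y := by
    have h2 : 2 ≤ K^y := le_trans (by omega) (Nat.le_self_pow (by omega) K)
    calc s + x + L ≤ (K^K)^ℓ + (K^K)^ℓ := by omega
    _ = (K^K)^ℓ * 2 := by ring
    _ ≤ (K^K)^ℓ * K^y := Nat.mul_le_mul_left _ h2
  have hS0 : (0:ℕ) ∈ S := by
    rw [hS]
    refine ⟨Nat.zero_le _, 1, le_rfl, by simp, by simp, ?_⟩
    simpa using hW'
  have hbdd : BddAbove S := ⟨ℓ, fun q hq => by rw [hS] at hq; exact hq.1⟩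
  have hmem : sSup S ∈ S := Nat.sSup_mem ⟨0, hS0⟩ hbdd
  have hself : ∀ r, r ∈ S → r ≤ ℓ := fun r hr => by rw [hS] at hr; exact hr.1
  have hlev_le : sSup S ≤ ℓ := hself _ hmem
  push_neg at hnp
  obtain ⟨hne, himp⟩ := hnp
  have hlt : sSup S < ℓ := lt_of_le_of_ne hlev_le hne
  set v := sSup S with hv
  have hnot : v + 1 ∉ S := by
    intro h
    have := le_csSup hbdd h
    omega
  have hA : (K^K)^ℓ * K^y / (K^K)^(v+1) = (K^K)^(ℓ-(v+1)) * K^y :=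
    hpow _ (by omega)
  have hNA : (K^K)^(v+1) * ((K^K)^(ℓ-(v+1)) * K^y) = (K^K)^ℓ * K^y := by
    rw [← mul_assoc, ← pow_add]; congr 2; omega
  have hApos : 0 < (K^K)^(ℓ-(v+1)) * K^y := by positivity
  have hcut : (K^K)^(ℓ-(v+1)) * K^y < (s + x) % ((K^K)^(ℓ-(v+1)) * K^y) + L := by
    by_contra hcon
    push_neg at hcon
    apply hnot
    rw [hS]
    refine ⟨by omega, ?_⟩
    rw [hA]
    exact contained_of_mod (s+x) L _ ((K^K)^(v+1)) hApos
      (by rw [hNA]; exact hW') hL hcon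
  have hcnt := himp hlt
  rw [hA] at hcnt
  have hlen : L < (K/2+2) * ((K^K)^(ℓ-(v+1)) * K^y) := by
    by_contra hcon
    push_neg at hcon
    have hge := count_ge_aux (s+x) L ((K^K)^(ℓ-(v+1)) * K^y) ((K^K)^(v+1)) (K/2)
      hApos (by rw [hNA]; exact hW') hcon
    omega
  have hKm : K^(K*(ℓ-(v+1))+y) = (K^K)^(ℓ-(v+1)) * K^y := by
    rw [pow_add, pow_mul]
  refine ⟨K*(ℓ-(v+1)) + y, ⟨by omega, ?_, ?_⟩, ?_, ?_⟩
  · have h6 : K*(ℓ-(v+1)) ≤ K*(ℓ-1) := Nat.mul_le_mul_left K (by omega)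
    have h7 : K*(ℓ-1) + K*1 = K*ℓ := by rw [← Nat.mul_add]; congr 1; omega
    omega
  · rw [hKm]; exact hlen
  · rw [hKm]; exact hcut
  · have h9 : (K*(ℓ-(v+1)) + y - 1)/K = ℓ-(v+1) := by
      rw [show K*(ℓ-(v+1)) + y - 1 = K*(ℓ-(v+1)) + (y-1) by omega,
        Nat.mul_add_div hK0, Nat.div_eq_of_lt (by omega)]
      omega
    rw [h9]
    omega

/-- The total (real-valued) bound on the number of bad pairs. -/
lemma sum_bound (K ℓ s L : ℕ) (hK : 4 ≤ K) (hL : 1 ≤ L) :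
    ∑ m ∈ (Finset.Icc 1 (K*ℓ)).filter (fun m => L < (K/2+2)*K^m),
      (((((Finset.Icc 1 ((K^K)^ℓ)).filter (fun x => K^m < (s+x) % K^m + L))
        ×ˢ ({m - K*((m-1)/K)} : Finset ℕ)).card : ℝ))
      ≤ 3 * (((K^K)^ℓ : ℕ) : ℝ) := by
  classical
  have hK1 : (1:ℕ) < K := by omega
  have hKR : (0:ℝ) < K := by exact_mod_cast (by omega : 0 < K)
  set W := (K^K)^ℓ with hW
  set c := Nat.clog K L with hc
  set M := (Finset.Icc 1 (K*ℓ)).filter (fun m => L < (K/2+2)*K^m) with hM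
  set f : ℕ → ℝ := fun m => ((((Finset.Icc 1 W).filter
    (fun x => K^m < (s+x) % K^m + L))
    ×ˢ ({m - K*((m-1)/K)} : Finset ℕ)).card : ℝ) with hf
  have hfcard : ∀ m, f m = (((Finset.Icc 1 W).filter
      (fun x => K^m < (s+x) % K^m + L)).card : ℝ) := by
    intro m; rw [hf]; simp
  have hfW : ∀ m, f m ≤ (W:ℝ) := by
    intro m
    rw [hfcard]
    have h1 : ((Finset.Icc 1 W).filter (fun x => K^m < (s+x) % K^m + L)).card
        ≤ W := by
      calc _ ≤ (Finset.Icc 1 W).card := Finset.card_filter_le _ _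
      _ = W := by rw [Nat.card_Icc]; omega
    exact_mod_cast h1
  have hf0 : ∀ m, 0 ≤ f m := fun m => by rw [hf]; positivity
  rw [← Finset.sum_filter_add_sum_filter_not M (fun m => K^m < L) f]
  have h1 : ∑ m ∈ M.filter (fun m => K^m < L), f m ≤ (W:ℝ) := by
    have hcard1 : (M.filter (fun m => K^m < L)).card ≤ 1 := by
      rw [Finset.card_le_one]
      intro a ha b hb
      simp only [hM, Finset.mem_filter, Finset.mem_Icc] at ha hb
      by_contra hne
      have key : ∀ a b : ℕ, a < b → L < (K/2+2)*K^a → K^b < L → False := by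
        intro a b hab h2 h3
        have h5 : K/2+2 ≤ K := by omega
        have h6 : (K/2+2)*K^a ≤ K*K^a := Nat.mul_le_mul_right _ h5
        have h7 : K*K^a ≤ K^b := by
          rw [← pow_succ']
          exact Nat.pow_le_pow_right (by omega) (by omega)
        omega
      rcases Nat.lt_or_ge a b with h | h
      · exact key a b h ha.1.2 hb.2
      · rcases Nat.lt_or_ge b a with h' | h'
        · exact key b a h' hb.1.2 ha.2
        · omega
    calc ∑ m ∈ M.filter (fun m => K^m < L), f m
        ≤ (M.filter (fun m => K^m < L)).card • (W:ℝ) :=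
          Finset.sum_le_card_nsmul _ _ _ (fun m _ => hfW m)
    _ = ((M.filter (fun m => K^m < L)).card : ℝ) * W := nsmul_eq_mul _ _
    _ ≤ 1 * (W:ℝ) := by
        apply mul_le_mul_of_nonneg_right _ (Nat.cast_nonneg W)
        exact_mod_cast hcard1
    _ = (W:ℝ) := one_mul _
  have h2 : ∑ m ∈ M.filter (fun m => ¬ K^m < L), f m ≤ 2*(W:ℝ) := by
    have hsub : M.filter (fun m => ¬ K^m < L) ⊆ Finset.Icc c (K*ℓ) := by
      intro m hm
      simp only [hM, Finset.mem_filter, Finset.mem_Icc, not_lt] at hm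
      rw [Finset.mem_Icc]
      exact ⟨(Nat.clog_le_iff_le_pow hK1).mpr hm.2, hm.1.1.2⟩
    have hterm : ∀ m ∈ M.filter (fun m => ¬ K^m < L),
        f m ≤ (W:ℝ) * (1/K)^(m - c) := by
      intro m hm
      simp only [hM, Finset.mem_filter, Finset.mem_Icc, not_lt] at hm
      obtain ⟨⟨⟨hm1, hm2⟩, hm3⟩, hm4⟩ := hm
      have hdvd : K^m ∣ W := by
        rw [hW, ← pow_mul]
        exact pow_dvd_pow K hm2
      have hKm0 : (0:ℕ) < K^m := by positivity
      have hcc := cut_count_aux W (K^m) s L hKm0 hdvd hm4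
      have hcm : c ≤ m := (Nat.clog_le_iff_le_pow hK1).mpr hm4
      have hLc : (L:ℕ) - 1 ≤ K^c := by
        have hlp := Nat.le_pow_clog hK1 L
        rw [← hc] at hlp
        omega
      have hKmne : ((K:ℝ))^m ≠ 0 := by positivity
      rw [hfcard]
      calc (((Finset.Icc 1 W).filter (fun x => K^m < (s+x) % K^m + L)).card : ℝ)
          ≤ ((W/K^m * (L-1) : ℕ) : ℝ) := Nat.cast_le.mpr hcc
      _ = (W:ℝ)/(K:ℝ)^m * ((L-1 : ℕ) : ℝ) := by
          rw [Nat.cast_mul, Nat.cast_div hdvd (by positivity)]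
          push_cast
          ring
      _ ≤ (W:ℝ)/(K:ℝ)^m * ((K:ℝ))^c := by
          apply mul_le_mul_of_nonneg_left _ (by positivity)
          exact_mod_cast hLc
      _ = (W:ℝ) * (1/K)^(m-c) := by
          have hsplit : (K:ℝ)^m = (K:ℝ)^c * (K:ℝ)^(m-c) := by
            rw [← pow_add]; congr 1; omega
          rw [one_div_pow, hsplit]
          field_simp
    calc ∑ m ∈ M.filter (fun m => ¬ K^m < L), f m
        ≤ ∑ m ∈ M.filter (fun m => ¬ K^m < L), (W:ℝ)*(1/K)^(m-c) :=
          Finset.sum_le_sum hterm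
    _ ≤ ∑ m ∈ Finset.Icc c (K*ℓ), (W:ℝ)*(1/K)^(m-c) :=
          Finset.sum_le_sum_of_subset_of_nonneg hsub (fun i _ _ => by positivity)
    _ = (W:ℝ) * ∑ m ∈ Finset.Icc c (K*ℓ), ((1:ℝ)/K)^(m-c) := by
          rw [Finset.mul_sum]
    _ ≤ (W:ℝ) * 2 := by
          apply mul_le_mul_of_nonneg_left _ (Nat.cast_nonneg W)
          rw [← Finset.Ico_add_one_right_eq_Icc, Finset.sum_Ico_eq_sum_range]
          have hre : ∀ i, ((1:ℝ)/K)^(c+i-c) = (1/K)^i := fun i => by congr 1; omega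
          rw [Finset.sum_congr rfl (fun i _ => hre i)]
          calc ∑ i ∈ Finset.range (K*ℓ+1-c), ((1:ℝ)/K)^i
              ≤ ∑ i ∈ Finset.range (K*ℓ+1-c), ((1:ℝ)/2)^i :=
                Finset.sum_le_sum (fun i _ => pow_le_pow_left₀ (by positivity)
                  (one_div_le_one_div_of_le (by norm_num)
                    (by exact_mod_cast (by omega : (2:ℕ) ≤ K))) i)
          _ ≤ 2 := sum_geometric_two_le _
    _ = 2*(W:ℝ) := mul_comm _ _
  linarith

/- Goodness Lemma (arithmetic core): with `ε = 1/K`, `γ = K^K`, `W* = γ^ℓ`, a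
driver occupying the weight positions `(s+x, s+x+L]` after a uniformly random
shift `x ∈ {1,…,W*}` inside a bounding path of random total weight
`W' = W*·K^y`, `y ∈ {1,…,K}` uniform, is good — i.e. its dissection level is
the bottom level `ℓ`, or it fully contains at least `K/2` blocks of the level
below its own — with probability at least `1 − 3/K`. The level-`q` blocks are
the intervals `((j−1)·α_q, j·α_q]`, `j = 1,…,γ^q`, with `α_q = W'/γ^q`, and
the level of an interval is the largest `q ≤ ℓ` such that it lies inside a
single level-`q` block. -/
open Classical in
theorem goodness_lemma (K ℓ s L : ℕ) (hK : 4 ≤ K) (hKeven : 2 ∣ K)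
    (hℓ : 1 ≤ ℓ) (hL : 1 ≤ L) (hsL : s + L ≤ (K ^ K) ^ ℓ) :
    1 - 3 / (K : ℝ) ≤
      ((((Finset.Icc 1 ((K ^ K) ^ ℓ)) ×ˢ (Finset.Icc 1 K)).filter
        (fun p : ℕ × ℕ =>
          let γ : ℕ := K ^ K
          let W' : ℕ := γ ^ ℓ * K ^ p.2
          let A : ℕ → ℕ := fun q => W' / γ ^ q
          let contained : ℕ → Prop := fun q =>
            ∃ j : ℕ, 1 ≤ j ∧ j ≤ γ ^ q ∧
              (j - 1) * A q ≤ s + p.1 ∧ s + p.1 + L ≤ j * A q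
          let level : ℕ := sSup {q | q ≤ ℓ ∧ contained q}
          level = ℓ ∨
            (level < ℓ ∧ K / 2 ≤
              ((Finset.Icc 1 (γ ^ (level + 1))).filter
                (fun j => s + p.1 ≤ (j - 1) * A (level + 1) ∧
                  j * A (level + 1) ≤ s + p.1 + L)).card))).card : ℝ)
        / ((((K : ℝ) ^ K) ^ ℓ) * (K : ℝ)) := by
  have hK0 : 0 < K := by omega
  set P : ℕ × ℕ → Prop := fun p : ℕ × ℕ =>
          let γ : ℕ := K ^ K
          let W' : ℕ := γ ^ ℓ * K ^ p.2
          let A : ℕ → ℕ := fun q => W' / γ ^ q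
          let contained : ℕ → Prop := fun q =>
            ∃ j : ℕ, 1 ≤ j ∧ j ≤ γ ^ q ∧
              (j - 1) * A q ≤ s + p.1 ∧ s + p.1 + L ≤ j * A q
          let level : ℕ := sSup {q | q ≤ ℓ ∧ contained q}
          level = ℓ ∨
            (level < ℓ ∧ K / 2 ≤
              ((Finset.Icc 1 (γ ^ (level + 1))).filter
                (fun j => s + p.1 ≤ (j - 1) * A (level + 1) ∧
                  j * A (level + 1) ≤ s + p.1 + L)).card) with hPdef
  set W : ℕ := (K^K)^ℓ with hWdef
  set T : Finset (ℕ × ℕ) := (Finset.Icc 1 W) ×ˢ (Finset.Icc 1 K) with hTdef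
  set M : Finset ℕ := (Finset.Icc 1 (K*ℓ)).filter (fun m => L < (K/2+2)*K^m)
    with hMdef
  set B : ℕ → Finset (ℕ × ℕ) := fun m =>
    ((Finset.Icc 1 W).filter (fun x => K^m < (s+x) % K^m + L))
      ×ˢ ({m - K*((m-1)/K)} : Finset ℕ) with hBdef
  have hbadsub : T.filter (fun p => ¬ P p) ⊆ M.biUnion B := by
    intro p hp
    rw [Finset.mem_filter] at hp
    obtain ⟨hpT, hnp⟩ := hp
    rw [hTdef, Finset.mem_product, Finset.mem_Icc, Finset.mem_Icc] at hpT
    rw [hPdef] at hnp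
    obtain ⟨m, ⟨hm1, hm2, hm3⟩, hcut, hym⟩ :=
      bad_mem K ℓ s L p.1 p.2 _ rfl hK hℓ hL hsL hpT.1.1
        (hWdef ▸ hpT.1.2) hpT.2.1 hpT.2.2 hnp
    rw [Finset.mem_biUnion]
    refine ⟨m, ?_, ?_⟩
    · simp only [hMdef, Finset.mem_filter, Finset.mem_Icc]
      exact ⟨⟨hm1, hm2⟩, hm3⟩
    · simp only [hBdef, Finset.mem_product, Finset.mem_filter, Finset.mem_Icc,
        Finset.mem_singleton]
      exact ⟨⟨⟨hpT.1.1, hpT.1.2⟩, hcut⟩, hym⟩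
  have hbcard : (T.filter (fun p => ¬ P p)).card ≤ ∑ m ∈ M, (B m).card :=
    le_trans (Finset.card_le_card hbadsub) (Finset.card_biUnion_le)
  have hsum : ((∑ m ∈ M, (B m).card : ℕ) : ℝ) ≤ 3 * (W:ℝ) := by
    push_cast
    simp only [hMdef, hBdef, hWdef]
    exact sum_bound K ℓ s L hK hL
  have hfilter : (T.filter P).card + (T.filter (fun p => ¬ P p)).card = T.card :=
    Finset.card_filter_add_card_filter_not (p := P)
  have hTcard : T.card = W * K := by
    rw [hTdef, Finset.card_product]
    simp [Nat.card_Icc]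
  have hWpos : 0 < W := by rw [hWdef]; positivity
  have hKR : (0:ℝ) < K := by exact_mod_cast hK0
  have hWR : (0:ℝ) < W := by exact_mod_cast hWpos
  have hDen : (((K:ℝ))^K)^ℓ = (W:ℝ) := by rw [hWdef]; push_cast; ring
  rw [hDen, le_div_iff₀ (by positivity)]
  have hid : (1 - 3/(K:ℝ)) * ((W:ℝ)*(K:ℝ)) = W*K - 3*W := by
    field_simp
  rw [hid]
  have hcast : ((T.filter P).card : ℝ)
      = (W:ℝ)*(K:ℝ) - ((T.filter (fun p => ¬ P p)).card : ℝ) := by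
    have h := congrArg (Nat.cast : ℕ → ℝ) (hfilter.trans hTcard)
    push_cast at h
    linarith
  have hbadR : ((T.filter (fun p => ¬ P p)).card : ℝ) ≤ 3*(W:ℝ) :=
    le_trans (Nat.cast_le.mpr hbcard) hsum
  rw [hcast]
  linarith
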